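/- Let m ≥ 2 and let k = (k_0, k_1, ...) be positive integers with m coprime to (k_0-1)! and to k_j! for every j ≥ 1. Then for every i ≥ 0, the following identity holds in (ZMod m)⟦q⟧: (1 - q^{m^{i+1}}) · ∏_{j=0}^{i} (G_{m^j}^{k_j} - 1) = (∑_{ℓ_0=1}^{m} C(k_0-1+ℓ_0, k_0-1) q^{ℓ_0}) · ∏_{j=1}^{i} (∑_{ℓ_j=0}^{m-1} (C(k_j+ℓ_j, k_j) - 1) q^{ℓ_j m^j}). Equivalently, ∏_{j=0}^{i} ((1-q^{m^j})^{-k_j} - 1) = (1-q^{m^{i+1}})^{-1} · (∑_{ℓ_0=1}^{m} C(k_0-1+ℓ_0, k_0-1) q^{ℓ_0}) · ∏_{j=1}^{i} (∑_{ℓ_j=0}^{m-1} (C(k_j+ℓ_j, k_j) - 1) q^{ℓ_j m^j}). -/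

import Mathlib

open PowerSeries Finset

/-- **finite product expansion without gaps, equation (4) of the paper.**
Let `m ≥ 2` and `k₀, k₁, …` be positive integers with `m` coprime to `(k₀-1)!` and to
`k_j!` for `j ≥ 1`, and let `G r` denote the inverse of `1 - q^r` in `(ZMod m)⟦q⟧`.
Then for every `i ≥ 0`, in `(ZMod m)⟦q⟧` we have
`(1 - q^{m^{i+1}}) · ∏_{j=0}^{i} (G_{m^j}^{k_j} - 1)
  = (∑_{ℓ₀=1}^{m} C(k₀-1+ℓ₀, k₀-1) q^{ℓ₀})
    · ∏_{j=1}^{i} (∑_{ℓ=0}^{m-1} (C(k_j+ℓ, k_j) - 1) q^{ℓ m^j})`. -/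
noncomputable def FF (m r k : ℕ) : PowerSeries (ZMod m) :=
  PowerSeries.mk fun n => if r ∣ n then ((k + n / r).choose k : ZMod m) else 0

lemma coeff_FF (m r k n : ℕ) :
    (coeff (R := ZMod m) n) (FF m r k) = if r ∣ n then ((k + n / r).choose k : ZMod m) else 0 :=
  coeff_mk _ _

lemma coeff_one_sub_X_pow_mul {m : ℕ} (r n : ℕ) (f : PowerSeries (ZMod m)) :
    coeff (R := ZMod m) n ((1 - X ^ r) * f)
      = coeff (R := ZMod m) n f - if r ≤ n then coeff (R := ZMod m) (n - r) f else 0 := by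
  rw [sub_mul, one_mul, map_sub, coeff_X_pow_mul']

lemma not_dvd_sub {r n : ℕ} (h : ¬ r ∣ n) (hle : r ≤ n) : ¬ r ∣ (n - r) := by
  intro hd
  exact h (by have := Nat.dvd_add hd (dvd_refl r); rwa [Nat.sub_add_cancel hle] at this)

lemma FF_base {m r : ℕ} (hr : 1 ≤ r) : (1 - X ^ r) * FF m r 0 = 1 := by
  ext n
  rw [coeff_one_sub_X_pow_mul]
  simp only [coeff_FF, PowerSeries.coeff_one]
  rcases em (r ∣ n) with h | h
  · obtain ⟨l, rfl⟩ := h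
    rcases Nat.eq_zero_or_pos l with rfl | hl
    · simp [show ¬ r ≤ 0 from by omega]
    · obtain ⟨t, rfl⟩ : ∃ t, l = t + 1 := ⟨l - 1, by omega⟩
      have h1 : r ≤ r * (t + 1) := Nat.le_mul_of_pos_right r (by omega)
      have hsub : r * (t + 1) - r = r * t := by rw [Nat.mul_succ]; omega
      have h2 : r ∣ r * (t + 1) - r := hsub ▸ Dvd.intro _ rfl
      rw [if_pos (dvd_mul_right r (t + 1)), if_pos h1, if_pos (hsub ▸ h2),
        if_neg (by positivity : ¬ r * (t + 1) = 0)]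
      simp
  · have hn : n ≠ 0 := by rintro rfl; exact h (dvd_zero r)
    rw [if_neg h, if_neg hn]
    rcases em (r ≤ n) with hle | hle
    · rw [if_pos hle, if_neg (not_dvd_sub h hle)]; simp
    · rw [if_neg hle]; simp

lemma FF_step {m r : ℕ} (hr : 1 ≤ r) (k : ℕ) :
    (1 - X ^ r) * FF m r (k + 1) = FF m r k := by
  ext n
  rw [coeff_one_sub_X_pow_mul]
  simp only [coeff_FF]
  rcases em (r ∣ n) with h | h
  · obtain ⟨l, rfl⟩ := h
    have hdiv : r * l / r = l := Nat.mul_div_cancel_left l hr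
    rcases Nat.eq_zero_or_pos l with rfl | hl
    · simp [show ¬ r ≤ 0 from by omega]
    · obtain ⟨t, rfl⟩ : ∃ t, l = t + 1 := ⟨l - 1, by omega⟩
      have h1 : r ≤ r * (t + 1) := Nat.le_mul_of_pos_right r (by omega)
      have hsub : r * (t + 1) - r = r * t := by rw [Nat.mul_succ]; omega
      have h2 : r ∣ r * (t + 1) - r := hsub ▸ Dvd.intro _ rfl
      rw [if_pos (dvd_mul_right r (t + 1)), if_pos h1, if_pos h2, if_pos (dvd_mul_right r (t + 1)),
        hdiv, hsub, Nat.mul_div_cancel_left _ hr]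
      have hp : (k + 1 + (t + 1)).choose (k + 1) = (k + 1 + t).choose k + (k + 1 + t).choose (k + 1) := by
        rw [show k + 1 + (t + 1) = (k + 1 + t) + 1 by ring]
        exact Nat.choose_succ_succ' _ _
      rw [hp]
      push_cast
      ring
  · have hn : n ≠ 0 := by rintro rfl; exact h (dvd_zero r)
    rw [if_neg h, if_neg h]
    rcases em (r ≤ n) with hle | hle
    · rw [if_pos hle, if_neg (not_dvd_sub h hle)]; simp
    · rw [if_neg hle]; simp

lemma choose_congr {m k : ℕ} (hm : 2 ≤ m) (hco : Nat.Coprime m (Nat.factorial k))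
    {n : ℕ} (hn : m ≤ n) :
    (((k + n).choose k : ℕ) : ZMod m) = (((k + (n - m)).choose k : ℕ) : ZMod m) := by
  haveI : NeZero m := ⟨by omega⟩
  have hu : IsUnit ((Nat.factorial k : ℕ) : ZMod m) :=
    (ZMod.isUnit_iff_coprime _ m).2 (Nat.Coprime.symm hco)
  have asc : ∀ j : ℕ,
      (((n + 1).ascFactorial j : ℕ) : ZMod m) = (((n - m + 1).ascFactorial j : ℕ) : ZMod m) := by
    intro j
    induction j with
    | zero => simp [Nat.ascFactorial_zero]
    | succ j ih =>
        rw [Nat.ascFactorial_succ, Nat.ascFactorial_succ, Nat.cast_mul, Nat.cast_mul, ih]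
        congr 1
        rw [show n + 1 + j = (n - m + 1 + j) + m by omega, Nat.cast_add, ZMod.natCast_self,
          add_zero]
  have e1 := Nat.ascFactorial_eq_factorial_mul_choose n k
  have e2 := Nat.ascFactorial_eq_factorial_mul_choose (n - m) k
  have key : ((Nat.factorial k : ℕ) : ZMod m) * ((n + k).choose k : ZMod m)
      = ((Nat.factorial k : ℕ) : ZMod m) * ((n - m + k).choose k : ZMod m) := by
    have := asc k
    rw [e1, e2] at this
    push_cast at this ⊢
    convert this using 2
  have := hu.mul_left_cancel key
  rwa [Nat.add_comm k n, Nat.add_comm k (n - m)]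

lemma lemma0 {m : ℕ} (hm : 2 ≤ m) (k : ℕ) (hco : Nat.Coprime m (Nat.factorial k)) :
    (1 - X ^ m) * (FF m 1 k - 1)
      = ∑ ℓ ∈ Icc 1 m, (PowerSeries.C (R := ZMod m)) (((k + ℓ).choose k : ℕ) : ZMod m) * X ^ ℓ := by
  ext n
  rw [coeff_one_sub_X_pow_mul]
  simp only [map_sub, coeff_FF, PowerSeries.coeff_one, map_sum, coeff_C_mul, coeff_X_pow,
    mul_ite, mul_one, mul_zero, one_dvd, if_true, Nat.div_one]
  rw [Finset.sum_ite_eq]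
  rcases Nat.eq_zero_or_pos n with rfl | hn
  · simp [show ¬ m ≤ 0 from by omega, show (0 : ℕ) ∉ Icc 1 m from by simp]
  · rw [if_neg (by omega : ¬ n = 0)]
    rcases lt_trichotomy n m with h | rfl | h
    · rw [if_neg (by omega : ¬ m ≤ n), if_pos (by simp; omega : n ∈ Icc 1 m)]
      ring
    · rw [if_pos le_rfl, if_pos (by simp; omega : n ∈ Icc 1 n), Nat.sub_self,
        if_pos rfl]
      simp
    · rw [if_pos (by omega : m ≤ n), if_neg (by omega : ¬ n - m = 0),
        if_neg (by simp; omega : n ∉ Icc 1 m)]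
      rw [choose_congr hm hco (by omega : m ≤ n)]
      ring

lemma coeff_T {m r : ℕ} (hr : 1 ≤ r) (c : ℕ → ZMod m) (n : ℕ) :
    coeff (R := ZMod m) n (∑ ℓ ∈ range m, (PowerSeries.C (R := ZMod m)) (c ℓ) * X ^ (ℓ * r))
      = if r ∣ n ∧ n / r < m then c (n / r) else 0 := by
  simp only [map_sum, coeff_C_mul, coeff_X_pow, mul_ite, mul_one, mul_zero]
  rcases em (r ∣ n ∧ n / r < m) with ⟨⟨l, rfl⟩, h2⟩ | h
  · rw [Nat.mul_div_cancel_left l hr] at h2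
    rw [if_pos ⟨dvd_mul_right r l, by rwa [Nat.mul_div_cancel_left l hr]⟩,
      Nat.mul_div_cancel_left l hr,
      Finset.sum_eq_single_of_mem l (Finset.mem_range.2 h2)]
    · rw [if_pos (mul_comm r l)]
    · intro b _ hb
      rw [if_neg]
      intro hEq
      have hEq2 : r * b = r * l := by rw [mul_comm r b, ← hEq]
      exact hb (Nat.eq_of_mul_eq_mul_left (by omega) hEq2)
  · rw [if_neg h]
    apply Finset.sum_eq_zero
    intro ℓ hℓ
    rw [if_neg]
    rintro rfl
    exact h ⟨dvd_mul_left r ℓ, by rw [Nat.mul_div_cancel ℓ hr]; exact Finset.mem_range.1 hℓ⟩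

lemma lemmaJ {m : ℕ} (hm : 2 ≤ m) {r : ℕ} (hr : 1 ≤ r) (k : ℕ)
    (hco : Nat.Coprime m (Nat.factorial (k + 1))) :
    (1 - X ^ (r * m)) * (FF m r k - 1)
      = (1 - X ^ r) * ∑ ℓ ∈ range m,
          (PowerSeries.C (R := ZMod m)) ((((k + 1 + ℓ).choose (k + 1) : ℕ) : ZMod m) - 1)
            * X ^ (ℓ * r) := by
  have hco' : Nat.Coprime m (Nat.factorial k) :=
    hco.coprime_dvd_right (Nat.factorial_dvd_factorial (by omega))
  ext n
  rw [coeff_one_sub_X_pow_mul, coeff_one_sub_X_pow_mul,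
    coeff_T hr (fun ℓ => (((k + 1 + ℓ).choose (k + 1) : ℕ) : ZMod m) - 1),
    coeff_T hr (fun ℓ => (((k + 1 + ℓ).choose (k + 1) : ℕ) : ZMod m) - 1),
    map_sub, map_sub]
  simp only [coeff_FF, PowerSeries.coeff_one]
  rcases em (r ∣ n) with ⟨l, rfl⟩ | h
  · have hdiv : r * l / r = l := Nat.mul_div_cancel_left l hr
    rcases Nat.eq_zero_or_pos l with rfl | hl
    · rw [Nat.mul_zero]
      rw [if_pos (dvd_zero r), if_pos rfl,
        if_neg (show ¬ r * m ≤ 0 from by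
          have : 0 < r * m := Nat.mul_pos (by omega) (by omega); omega),
        if_neg (by omega : ¬ r ≤ 0), if_pos ⟨dvd_zero r, by rw [Nat.zero_div]; omega⟩]
      simp
    · have hne : ¬ r * l = 0 := by positivity
      have hsub1 : r * l - r = r * (l - 1) := by
        have e : r * (l - 1) + r * 1 = r * l := by rw [← Nat.mul_add]; congr 1; omega
        omega
      have hd1 : r ∣ r * l - r := hsub1 ▸ Dvd.intro _ rfl
      have hdiv1 : (r * l - r) / r = l - 1 := by rw [hsub1, Nat.mul_div_cancel_left _ hr]
      have hle1 : r ≤ r * l := Nat.le_mul_of_pos_right r hl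
      rcases lt_trichotomy l m with h2 | rfl | h2
      · -- 1 ≤ l < m
        rw [if_pos (dvd_mul_right r l), hdiv, if_neg hne,
          if_neg (show ¬ r * m ≤ r * l from fun hc =>
            absurd (Nat.le_of_mul_le_mul_left hc (by omega)) (by omega)),
          if_pos (show r ∣ r * l ∧ l < m from ⟨dvd_mul_right r l, h2⟩),
          if_pos hle1, hdiv1,
          if_pos (show r ∣ r * l - r ∧ l - 1 < m from ⟨hd1, by omega⟩)]
        obtain ⟨t, rfl⟩ : ∃ t, l = t + 1 := ⟨l - 1, by omega⟩
        simp only [Nat.add_sub_cancel]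
        have hp : (k + 1 + (t + 1)).choose (k + 1)
            = (k + 1 + t).choose k + (k + 1 + t).choose (k + 1) := by
          rw [show k + 1 + (t + 1) = (k + 1 + t) + 1 by ring]
          exact Nat.choose_succ_succ' _ _
        rw [hp]
        push_cast
        ring
      · -- l = m  (here m has been substituted by l)
        rw [if_pos (dvd_mul_right r l), hdiv, if_neg hne, if_pos (le_refl (r * l)),
          Nat.sub_self, if_pos (dvd_zero r), if_pos rfl, Nat.zero_div, Nat.add_zero,
          Nat.choose_self,
          if_neg (show ¬ (r ∣ r * l ∧ l < l) from fun hc => absurd hc.2 (lt_irrefl l)),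
          if_pos hle1, hdiv1,
          if_pos (show r ∣ r * l - r ∧ l - 1 < l from ⟨hd1, by omega⟩)]
        have hcc := choose_congr (k := k + 1) hm hco (le_refl l)
        rw [Nat.sub_self] at hcc
        have hp : (k + 1 + l).choose (k + 1) = (k + l).choose k + (k + l).choose (k + 1) := by
          rw [show k + 1 + l = (k + l) + 1 by ring]
          exact Nat.choose_succ_succ' _ _
        rw [hp, Nat.add_zero, Nat.choose_self] at hcc
        rw [show k + 1 + (l - 1) = k + l by omega]
        push_cast at hcc ⊢
        linear_combination hcc
      · -- l > m
        have hlem : r * m ≤ r * l := Nat.mul_le_mul le_rfl (by omega)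
        have hsubm : r * l - r * m = r * (l - m) := by
          have e : r * (l - m) + r * m = r * l := by rw [← Nat.mul_add]; congr 1; omega
          omega
        have hnem : ¬ r * l - r * m = 0 := by
          rw [hsubm]
          have : 0 < r * (l - m) := Nat.mul_pos (by omega) (by omega)
          omega
        have hdm : r ∣ r * l - r * m := hsubm ▸ Dvd.intro _ rfl
        have hdivm : (r * l - r * m) / r = l - m := by rw [hsubm, Nat.mul_div_cancel_left _ hr]
        rw [if_pos (dvd_mul_right r l), hdiv, if_neg hne, if_pos hlem, if_pos hdm, hdivm,
          if_neg hnem,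
          if_neg (show ¬ (r ∣ r * l ∧ l < m) from fun hc => absurd hc.2 (by omega)),
          if_pos hle1, hdiv1,
          if_neg (show ¬ (r ∣ r * l - r ∧ l - 1 < m) from fun hc => absurd hc.2 (by omega))]
        have hcc := choose_congr (k := k) hm hco' (show m ≤ l by omega)
        rw [hcc]
        ring
  · have hn : ¬ n = 0 := by rintro rfl; exact h (dvd_zero r)
    rw [if_neg h, if_neg hn,
      if_neg (show ¬ (r ∣ n ∧ n / r < m) from fun hc => h hc.1)]
    have z1 : (if r * m ≤ n then
        ((if r ∣ n - r * m then (((k + (n - r * m) / r).choose k : ℕ) : ZMod m) else 0)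
          - if n - r * m = 0 then 1 else 0) else 0) = 0 := by
      rcases em (r * m ≤ n) with hle | hle
      · have hnd : ¬ r ∣ (n - r * m) := by
          intro hd
          exact h (by
            have := Nat.dvd_add hd (Dvd.intro m rfl)
            rwa [Nat.sub_add_cancel hle] at this)
        have hnz : ¬ n - r * m = 0 := fun h0 => hnd (by rw [h0]; exact dvd_zero r)
        rw [if_pos hle, if_neg hnd, if_neg hnz, sub_zero]
      · rw [if_neg hle]
    have z2 : (if r ≤ n then
        (if r ∣ n - r ∧ (n - r) / r < m
          then (((k + 1 + (n - r) / r).choose (k + 1) : ℕ) : ZMod m) - 1 else 0) else 0) = 0 := by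
      rcases em (r ≤ n) with hle | hle
      · rw [if_pos hle, if_neg (fun hc => (not_dvd_sub h hle) hc.1)]
      · rw [if_neg hle]
    rw [z1, z2]
    ring

theorem finite_product_gapfree_expansion_mod (m : ℕ) (hm : 2 ≤ m) (k : ℕ → ℕ)
    (hk : ∀ j, 0 < k j)
    (h0 : Nat.Coprime m (Nat.factorial (k 0 - 1)))
    (hj : ∀ j, 1 ≤ j → Nat.Coprime m (Nat.factorial (k j)))
    (G : ℕ → PowerSeries (ZMod m)) (hG : ∀ r, 1 ≤ r → (1 - X ^ r) * G r = 1) (i : ℕ) :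
    (1 - X ^ m ^ (i + 1)) * ∏ j ∈ range (i + 1), ((G (m ^ j)) ^ k j - 1)
      = (∑ ℓ ∈ Icc 1 m, (PowerSeries.C (R := ZMod m)) ((k 0 - 1 + ℓ).choose (k 0 - 1) : ZMod m) * X ^ ℓ)
        * ∏ j ∈ Icc 1 i, ∑ ℓ ∈ range m,
            (PowerSeries.C (R := ZMod m)) (((k j + ℓ).choose (k j) : ZMod m) - 1) * X ^ (ℓ * m ^ j) := by
  have hGF : ∀ r, 1 ≤ r → G r = FF m r 0 := by
    intro r hr
    calc G r = ((1 - X ^ r) * FF m r 0) * G r := by rw [FF_base hr, one_mul]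
      _ = FF m r 0 * ((1 - X ^ r) * G r) := by ring
      _ = FF m r 0 := by rw [hG r hr, mul_one]
  have hGpow : ∀ r, 1 ≤ r → ∀ t : ℕ, G r ^ (t + 1) = FF m r t := by
    intro r hr t
    induction t with
    | zero => rw [pow_one]; exact hGF r hr
    | succ t ih =>
        have hstep : FF m r (t + 1) = G r * FF m r t := by
          calc FF m r (t + 1) = ((1 - X ^ r) * G r) * FF m r (t + 1) := by
                rw [hG r hr, one_mul]
            _ = G r * ((1 - X ^ r) * FF m r (t + 1)) := by ring
            _ = G r * FF m r t := by rw [FF_step hr t]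
        rw [hstep, ← ih, pow_succ]
        ring
  induction i with
  | zero =>
      simp only [zero_add, pow_one, Finset.range_one, Finset.prod_singleton, pow_zero]
      rw [show (Icc 1 0 : Finset ℕ) = ∅ from Finset.Icc_eq_empty (by omega), Finset.prod_empty,
        mul_one]
      have hp := hGpow 1 le_rfl (k 0 - 1)
      rw [show k 0 - 1 + 1 = k 0 from by have := hk 0; omega] at hp
      rw [hp]
      exact lemma0 hm (k 0 - 1) h0
  | succ i ih =>
      rw [Finset.prod_range_succ, Finset.prod_Icc_succ_top (by omega : 1 ≤ i + 1)]
      have hr1 : 1 ≤ m ^ (i + 1) := Nat.one_le_pow _ _ (by omega)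
      have hp := hGpow (m ^ (i + 1)) hr1 (k (i + 1) - 1)
      rw [show k (i + 1) - 1 + 1 = k (i + 1) from by have := hk (i + 1); omega] at hp
      have hJ := lemmaJ hm hr1 (k (i + 1) - 1)
        (by rw [show k (i + 1) - 1 + 1 = k (i + 1) from by have := hk (i + 1); omega]
            exact hj (i + 1) (by omega))
      rw [show k (i + 1) - 1 + 1 = k (i + 1) from by have := hk (i + 1); omega] at hJ
      rw [pow_succ m (i + 1), hp]
      linear_combination (∏ j ∈ range (i + 1), ((G (m ^ j)) ^ k j - 1)) * hJ
        + (∑ ℓ ∈ range m, (PowerSeries.C (R := ZMod m))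
            (((k (i + 1) + ℓ).choose (k (i + 1)) : ZMod m) - 1) * X ^ (ℓ * m ^ (i + 1))) * ih
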